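/- Let H₁, H₂ ⊆ ℂ^a be spanned by vectors ξ₁,…,ξ_n and η₁,…,η_n respectively, where ξ_iᵀξ_j = 0, η_iᵀη_j = 0, and ξ_iᵀη_j + ξ_jᵀη_i = 0 for all i, j. Assume additionally that the only isotropic vector x ∈ ℂ^a with xᵀξ_i = 0 = xᵀη_i for all i is x = 0. Then the map φ : H₁ → H₂ given by φ(Σλ_iξ_i) = Σλ_iη_i is a well-defined ℂ-linear isomorphism, and xᵀφ(y) = −φ(x)ᵀy for all x, y ∈ H₁. -/

import Mathlib

/-- The complex bilinear pairing on `ℂ^a`. -/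
noncomputable def bil {a : ℕ} (v w : Fin a → ℂ) : ℂ := ∑ i, v i * w i

lemma bil_comm {a : ℕ} (v w : Fin a → ℂ) : bil v w = bil w v := by
  simp [bil, mul_comm]

lemma bil_sum_left {a n : ℕ} (c : Fin n → ℂ) (u : Fin n → Fin a → ℂ) (w : Fin a → ℂ) :
    bil (∑ i, c i • u i) w = ∑ i, c i * bil (u i) w := by
  simp [bil, Finset.sum_mul, Finset.mul_sum]
  rw [Finset.sum_comm]
  apply Finset.sum_congr rfl; intros; apply Finset.sum_congr rfl; intros; ring

lemma bil_sum_sum {a n : ℕ} (c d : Fin n → ℂ) (u v : Fin n → Fin a → ℂ) :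
    bil (∑ i, c i • u i) (∑ j, d j • v j) = ∑ i, ∑ j, c i * d j * bil (u i) (v j) := by
  rw [bil_sum_left]
  apply Finset.sum_congr rfl; intro i _
  rw [bil_comm, bil_sum_left, Finset.mul_sum]
  apply Finset.sum_congr rfl; intro j _
  rw [bil_comm]; ring

lemma bil_zero_left {a : ℕ} (w : Fin a → ℂ) : bil 0 w = 0 := by simp [bil]

/-- Given `ξᵢ, ηᵢ` spanning `H₁, H₂ ⊆ ℂ^a` with `ξᵢᵀξⱼ = 0 = ηᵢᵀηⱼ` and
`ξᵢᵀηⱼ + ξⱼᵀηᵢ = 0`, and such that the only isotropic vector annihilating all `ξᵢ, ηᵢ`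
is zero, the map `φ(Σλᵢξᵢ) = Σλᵢηᵢ` is a well-defined ℂ-linear isomorphism `H₁ → H₂`
with `xᵀφ(y) = -φ(x)ᵀy`. -/
theorem stmt15 {a n : ℕ} (ξ η : Fin n → (Fin a → ℂ))
    (hξ : ∀ i j, bil (ξ i) (ξ j) = 0) (hη : ∀ i j, bil (η i) (η j) = 0)
    (hmix : ∀ i j, bil (ξ i) (η j) + bil (ξ j) (η i) = 0)
    (hnd : ∀ x : Fin a → ℂ, bil x x = 0 → (∀ i, bil x (ξ i) = 0) →
      (∀ i, bil x (η i) = 0) → x = 0) :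
    ∃ φ : (Submodule.span ℂ (Set.range ξ)) ≃ₗ[ℂ] (Submodule.span ℂ (Set.range η)),
      (∀ i, (φ ⟨ξ i, Submodule.subset_span ⟨i, rfl⟩⟩ : Fin a → ℂ) = η i) ∧
      ∀ x y : Submodule.span ℂ (Set.range ξ),
        bil (x : Fin a → ℂ) ((φ y : Fin a → ℂ)) = -bil ((φ x : Fin a → ℂ)) (y : Fin a → ℂ) := by
  set f := Fintype.linearCombination ℂ ξ with hf
  set g := Fintype.linearCombination ℂ η with hg
  -- key: ker f ≤ ker g and vice versa
  have key : ∀ c : Fin n → ℂ, f c = 0 → g c = 0 := by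
    intro c hc
    rw [Fintype.linearCombination_apply] at hc ⊢
    apply hnd
    · rw [bil_sum_sum]; simp [hη]
    · intro j
      have h0 : bil (∑ i, c i • ξ i) (η j) = 0 := by rw [hc, bil_zero_left]
      rw [bil_sum_left] at h0
      rw [bil_sum_left]
      calc ∑ i, c i * bil (η i) (ξ j)
          = -∑ i, c i * bil (ξ i) (η j) := by
            rw [← Finset.sum_neg_distrib]
            apply Finset.sum_congr rfl; intro i _
            rw [bil_comm]; linear_combination (c i) * hmix i j
        _ = 0 := by rw [h0, neg_zero]
    · intro j
      rw [bil_sum_left]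
      simp [hη]
  have key2 : ∀ c : Fin n → ℂ, g c = 0 → f c = 0 := by
    intro c hc
    rw [Fintype.linearCombination_apply] at hc ⊢
    apply hnd
    · rw [bil_sum_sum]; simp [hξ]
    · intro j
      rw [bil_sum_left]; simp [hξ]
    · intro j
      have h0 : bil (∑ i, c i • η i) (ξ j) = 0 := by rw [hc, bil_zero_left]
      rw [bil_sum_left] at h0
      rw [bil_sum_left]
      calc ∑ i, c i * bil (ξ i) (η j)
          = -∑ i, c i * bil (η i) (ξ j) := by
            rw [← Finset.sum_neg_distrib]
            apply Finset.sum_congr rfl; intro i _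
            rw [bil_comm (η i)]; linear_combination (c i) * hmix i j
        _ = 0 := by rw [h0, neg_zero]
  have hker : LinearMap.ker f = LinearMap.ker g := by
    ext c; constructor <;> intro h
    · exact key c h
    · exact key2 c h
  have hrξ : LinearMap.range f = Submodule.span ℂ (Set.range ξ) := Fintype.range_linearCombination ℂ ξ
  have hrη : LinearMap.range g = Submodule.span ℂ (Set.range η) := Fintype.range_linearCombination ℂ η
  set φ' : (Submodule.span ℂ (Set.range ξ)) ≃ₗ[ℂ] (Submodule.span ℂ (Set.range η)) :=
    (LinearEquiv.ofEq _ _ hrξ.symm) ≪≫ₗ f.quotKerEquivRange.symm ≪≫ₗ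
    Submodule.quotEquivOfEq _ _ hker ≪≫ₗ g.quotKerEquivRange ≪≫ₗ LinearEquiv.ofEq _ _ hrη
    with hφ'
  have hφ : ∀ (c : Fin n → ℂ) (h : f c ∈ Submodule.span ℂ (Set.range ξ)),
      ((φ' ⟨f c, h⟩ : Submodule.span ℂ (Set.range η)) : Fin a → ℂ) = g c := by
    intro c h
    have h1 : (LinearEquiv.ofEq _ _ hrξ.symm) ⟨f c, h⟩
        = f.quotKerEquivRange (Submodule.Quotient.mk c) := by
      apply Subtype.ext
      simp [LinearMap.quotKerEquivRange_apply_mk]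
    simp only [hφ', LinearEquiv.trans_apply, h1, LinearEquiv.symm_apply_apply]
    simp [Submodule.quotEquivOfEq_mk, LinearMap.quotKerEquivRange_apply_mk]
  have key3 : ∀ c d : Fin n → ℂ,
      bil (f c) (g d) + bil (g c) (f d) = 0 := by
    intro c d
    simp only [hf, hg, Fintype.linearCombination_apply]
    rw [bil_sum_sum, bil_sum_sum, ← Finset.sum_add_distrib]
    apply Finset.sum_eq_zero; intro i _
    rw [← Finset.sum_add_distrib]
    apply Finset.sum_eq_zero; intro j _
    rw [bil_comm (η i)]
    linear_combination (c i * d j) * hmix i j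
  refine ⟨φ', ?_, ?_⟩
  · intro i
    have hs : f (Pi.single i 1) = ξ i := by
      rw [hf, Fintype.linearCombination_apply_single, one_smul]
    have hmem : f (Pi.single i 1) ∈ Submodule.span ℂ (Set.range ξ) := by
      rw [hs]; exact Submodule.subset_span ⟨i, rfl⟩
    have : (⟨ξ i, Submodule.subset_span ⟨i, rfl⟩⟩ : Submodule.span ℂ (Set.range ξ))
        = ⟨f (Pi.single i 1), hmem⟩ := Subtype.ext hs.symm
    rw [this, hφ]
    rw [hg, Fintype.linearCombination_apply_single, one_smul]
  · intro x y
    obtain ⟨c, hc⟩ : (x : Fin a → ℂ) ∈ LinearMap.range f := by rw [hrξ]; exact x.2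
    obtain ⟨d, hd⟩ : (y : Fin a → ℂ) ∈ LinearMap.range f := by rw [hrξ]; exact y.2
    have hcm : f c ∈ Submodule.span ℂ (Set.range ξ) := by rw [hc]; exact x.2
    have hdm : f d ∈ Submodule.span ℂ (Set.range ξ) := by rw [hd]; exact y.2
    have hx : x = ⟨f c, hcm⟩ := Subtype.ext hc.symm
    have hy : y = ⟨f d, hdm⟩ := Subtype.ext hd.symm
    rw [hx, hy, hφ, hφ]
    simp only
    linear_combination key3 c d
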